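/- arXiv:2409.08011 — 2 statements merged into one kernel-verified Lean document; each statement's English description precedes it below -/
import Mathlib

section
/- Let A and B be n×n real symmetric matrices with A positive definite and B positive semidefinite. If det(A·B) = (trace(A·B)/n)^n, then A·B = λ·I for some λ ≥ 0. -/
open Matrix Finset
open scoped MatrixOrder

lemma amgm_eq_case (n : ℕ) (hn : 1 ≤ n) (x : Fin n → ℝ) (hx : ∀ i, 0 ≤ x i)
    (h : ∏ i, x i = ((∑ i, x i) / n) ^ n) :
    ∀ i, x i = (∑ i, x i) / n := by
  have hn0 : (n : ℝ) ≠ 0 := Nat.cast_ne_zero.mpr (by omega)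
  have hnpos : (0 : ℝ) < n := by positivity
  by_cases h0 : ∃ i, x i = 0
  · obtain ⟨i, hi⟩ := h0
    have hprod : ∏ i, x i = 0 := Finset.prod_eq_zero (mem_univ i) hi
    have hm : (∑ i, x i) / n = 0 := by
      have : ((∑ i, x i) / n) ^ n = 0 := by rw [← h, hprod]
      exact pow_eq_zero_iff (by omega) |>.mp this
    have hsum : ∑ i, x i = 0 := by
      field_simp at hm; simpa using hm
    intro j
    rw [hm]
    exact (Finset.sum_eq_zero_iff_of_nonneg (fun i _ => hx i)).mp hsum j (mem_univ j)
  · push_neg at h0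
    have hpos : ∀ i, 0 < x i := fun i => (hx i).lt_of_ne' (h0 i)
    have hne : (univ : Finset (Fin n)).Nonempty := ⟨⟨0, hn⟩, mem_univ _⟩
    have hmpos : 0 < (∑ i, x i) / n :=
      div_pos (Finset.sum_pos (fun i _ => hpos i) hne) hnpos
    have hw : ∑ _i : Fin n, (n : ℝ)⁻¹ = 1 := by
      simp [Finset.sum_const, card_univ]
      field_simp
    have hsum : ∑ i : Fin n, (n : ℝ)⁻¹ • x i = (∑ i, x i) / n := by
      rw [← Finset.smul_sum]; simp [smul_eq_mul, div_eq_inv_mul]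
    have hlogs : ∑ i : Fin n, (n : ℝ)⁻¹ • Real.log (x i) =
        Real.log ((∑ i, x i) / n) := by
      rw [← Finset.smul_sum, ← Real.log_prod (fun i _ => (hpos i).ne'), h,
        Real.log_pow]
      rw [smul_eq_mul, ← mul_assoc, inv_mul_cancel₀ hn0, one_mul]
    have hkey : ∀ ⦃j⦄, j ∈ (univ : Finset (Fin n)) → ∀ ⦃k⦄, k ∈ univ → x j = x k := by
      apply strictConcaveOn_log_Ioi.eq_of_map_sum_eq
        (fun i _ => by positivity) hw (fun i _ => hpos i)
      rw [hsum, hlogs]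
    intro i
    have hsx : ∑ j, x j = n * x i := by
      rw [Finset.sum_congr rfl (fun j _ => hkey (mem_univ j) (mem_univ i))]
      simp [Finset.sum_const, card_univ, mul_comm]
    rw [hsx]
    field_simp

lemma herm_trace {n : ℕ} (M : Matrix (Fin n) (Fin n) ℝ) (hM : M.IsHermitian) :
    M.trace = ∑ i, hM.eigenvalues i := by
  conv_lhs => rw [hM.spectral_theorem, Unitary.conjStarAlgAut_apply]
  rw [Matrix.trace_mul_cycle,
    (Matrix.mem_unitaryGroup_iff').mp (IsHermitian.eigenvectorUnitary hM).2, one_mul]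
  simp [Matrix.trace_diagonal]

lemma herm_const_eig {n : ℕ} (M : Matrix (Fin n) (Fin n) ℝ) (hM : M.IsHermitian)
    (t : ℝ) (h : ∀ i, hM.eigenvalues i = t) : M = t • 1 := by
  conv_lhs => rw [hM.spectral_theorem, Unitary.conjStarAlgAut_apply]
  have hd : Matrix.diagonal (RCLike.ofReal ∘ hM.eigenvalues) = t • (1 : Matrix (Fin n) (Fin n) ℝ) := by
    rw [show (RCLike.ofReal ∘ hM.eigenvalues : Fin n → ℝ) = fun _ => t from
      funext fun i => by simp [h i], ← Matrix.smul_one_eq_diagonal]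
  rw [hd, Matrix.mul_smul, Matrix.smul_mul, Matrix.mul_one,
    (Matrix.mem_unitaryGroup_iff).mp (IsHermitian.eigenvectorUnitary hM).2]

theorem trace_det_equality_case (n : ℕ) (hn : 1 ≤ n)
    (A B : Matrix (Fin n) (Fin n) ℝ)
    (hAs : Aᵀ = A) (hBs : Bᵀ = B)
    (hA : A.PosDef) (hB : B.PosSemidef)
    (heq : (A * B).det = ((A * B).trace / n) ^ n) :
    ∃ l : ℝ, 0 ≤ l ∧ A * B = l • (1 : Matrix (Fin n) (Fin n) ℝ) := by
  have hAps := hA.posSemidef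
  set S := CFC.sqrt A with hSdef
  have hSps : S.PosSemidef := (CFC.sqrt_nonneg A).posSemidef
  have hSS : S * S = A := CFC.sqrt_mul_sqrt_self A hAps.nonneg
  have hSH : Sᴴ = S := hSps.1
  set M := S * B * S with hMdef
  have hMps : M.PosSemidef := by
    have := hB.mul_mul_conjTranspose_same S
    rwa [hSH] at this
  have hdet : M.det = (A * B).det := by
    rw [hMdef, Matrix.det_mul, Matrix.det_mul, Matrix.det_mul]
    rw [show S.det * B.det * S.det = (S.det * S.det) * B.det by ring, ← Matrix.det_mul, hSS]
  have htr : M.trace = (A * B).trace := by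
    rw [hMdef, Matrix.trace_mul_cycle, hSS]
  set t := (A * B).trace / n with htdef
  have hdet2 : M.det = ∏ i, hMps.1.eigenvalues i := by
    simpa using hMps.1.det_eq_prod_eigenvalues
  have htr2 : M.trace = ∑ i, hMps.1.eigenvalues i := herm_trace M hMps.1
  have hall : ∀ i, hMps.1.eigenvalues i = t := by
    have hkey : ∏ i, hMps.1.eigenvalues i = ((∑ i, hMps.1.eigenvalues i) / n) ^ n := by
      rw [← hdet2, ← htr2, hdet, htr, heq]
    intro i
    rw [htdef, ← htr, htr2]
    exact amgm_eq_case n hn _ (fun i => hMps.eigenvalues_nonneg i) hkey i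
  have ht0 : 0 ≤ t := (hall ⟨0, hn⟩) ▸ hMps.eigenvalues_nonneg ⟨0, hn⟩
  have hMt : M = t • 1 := herm_const_eig M hMps.1 t hall
  have hdetS : IsUnit S.det := by
    have hdA : 0 < A.det := hA.det_pos
    rw [← hSS, Matrix.det_mul] at hdA
    exact isUnit_iff_ne_zero.mpr (fun h => by simp [h] at hdA)
  refine ⟨t, ht0, ?_⟩
  have hAB : A * B = S * M * S⁻¹ := by
    simp only [hMdef, ← Matrix.mul_assoc]
    rw [Matrix.mul_assoc (S * S * B) S S⁻¹, Matrix.mul_nonsing_inv S hdetS,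
      Matrix.mul_one, hSS]
  rw [hAB, hMt, Matrix.mul_smul, Matrix.smul_mul, Matrix.mul_one,
    Matrix.mul_nonsing_inv S hdetS]
end

section
/- Let A be an n×n positive definite symmetric real matrix and S an n×n symmetric real matrix. If trace(A·S) ≤ n·(det A)^(1/(n−1)) and I + S is positive semidefinite, then det(I + S) ≤ (1/det A)·(trace(A)/n + (det A)^(1/(n−1)))^n. -/
open Matrix
open scoped MatrixOrder

private lemma trace_eq_sum_eigs {n : ℕ} {M : Matrix (Fin n) (Fin n) ℝ}
    (h : M.IsHermitian) : M.trace = ∑ i, h.eigenvalues i := by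
  simpa using h.trace_eq_sum_eigenvalues

private lemma det_le_trace_div_pow {n : ℕ} (hn : 0 < n) {M : Matrix (Fin n) (Fin n) ℝ}
    (hM : M.PosSemidef) : M.det ≤ (M.trace / n) ^ n := by
  have h := hM.1
  have hev : ∀ i, 0 ≤ h.eigenvalues i := hM.eigenvalues_nonneg
  have hdet : M.det = ∏ i, h.eigenvalues i := by
    simpa using h.det_eq_prod_eigenvalues
  have htr : M.trace = ∑ i, h.eigenvalues i := trace_eq_sum_eigs h
  have key := Real.geom_mean_le_arith_mean_weighted Finset.univ
      (fun _ => (n : ℝ)⁻¹) h.eigenvalues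
      (fun i _ => by positivity)
      (by simp [Finset.card_univ]; field_simp)
      (fun i _ => hev i)
  have hprod : ∏ i : Fin n, h.eigenvalues i ^ ((n : ℝ)⁻¹)
      = (∏ i : Fin n, h.eigenvalues i) ^ ((n : ℝ)⁻¹) := by
    rw [← Real.finset_prod_rpow _ _ (fun i _ => hev i)]
  have hsum : ∑ i : Fin n, (n : ℝ)⁻¹ * h.eigenvalues i
      = (∑ i : Fin n, h.eigenvalues i) / n := by
    rw [← Finset.mul_sum]; ring
  rw [hprod, hsum] at key
  have h0 : (0:ℝ) ≤ ∏ i : Fin n, h.eigenvalues i := Finset.prod_nonneg fun i _ => hev i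
  have := pow_le_pow_left₀ (Real.rpow_nonneg h0 _) key n
  rwa [← Real.rpow_natCast ((∏ i : Fin n, h.eigenvalues i) ^ ((n:ℝ)⁻¹)) n,
    ← Real.rpow_mul h0, inv_mul_cancel₀ (by exact_mod_cast hn.ne'),
    Real.rpow_one, ← hdet, ← htr] at this

theorem det_one_add_S_bound (n : ℕ) (hn : 2 ≤ n)
    (A S : Matrix (Fin n) (Fin n) ℝ)
    (hAs : Aᵀ = A) (hSs : Sᵀ = S)
    (hA : A.PosDef)
    (hpos : (1 + S).PosSemidef)
    (htr : (A * S).trace ≤ n * A.det ^ ((1 : ℝ) / ((n : ℝ) - 1))) :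
    (1 + S).det ≤ (1 / A.det) *
      (A.trace / n + A.det ^ ((1 : ℝ) / ((n : ℝ) - 1))) ^ n := by
  have hn0 : 0 < n := by omega
  have hnR : (0:ℝ) < n := by exact_mod_cast hn0
  set c : ℝ := A.det ^ ((1 : ℝ) / ((n : ℝ) - 1)) with hc
  have hc0 : 0 ≤ c := Real.rpow_nonneg hA.det_pos.le _
  set M := CFC.sqrt A with hM
  have hMH : Mᴴ = M := (CFC.sqrt_nonneg A).posSemidef.1
  have hMM : M * M = A := CFC.sqrt_mul_sqrt_self A hA.posSemidef.nonneg
  set B := M * (1 + S) * M with hB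
  have hBpsd : B.PosSemidef := by
    have := hpos.mul_mul_conjTranspose_same M
    rwa [hMH] at this
  have htrB : B.trace = A.trace + (A * S).trace := by
    rw [hB, Matrix.trace_mul_cycle, hMM, mul_add, mul_one, trace_add]
  have hdetB : B.det = A.det * (1 + S).det := by
    rw [hB, det_mul, det_mul, ← hMM, det_mul]; ring
  have key := det_le_trace_div_pow hn0 hBpsd
  rw [hdetB, htrB] at key
  have htrB0 : (0:ℝ) ≤ A.trace + (A * S).trace := by
    rw [← htrB]
    rw [trace_eq_sum_eigs hBpsd.1]
    exact Finset.sum_nonneg fun i _ => hBpsd.eigenvalues_nonneg i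
  have hstep : ((A.trace + (A * S).trace) / n) ^ n ≤ (A.trace / n + c) ^ n := by
    apply pow_le_pow_left₀ (by positivity)
    rw [div_le_iff₀ hnR]
    have : (A.trace / n + c) * n = A.trace + n * c := by field_simp
    rw [this]
    linarith [htr]
  have hfinal : A.det * (1 + S).det ≤ (A.trace / n + c) ^ n := key.trans hstep
  rw [one_div, ← div_eq_inv_mul]
  rw [le_div_iff₀ hA.det_pos]
  linarith [hfinal]
end
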